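/- Let (X,d) be a metric space, L : X → ℝ, and G : X → [0,∞) a Borel strong upper gradient of L. Let η : [0,∞) → X be a gradient-flow curve of L with respect to G with η(0) = μ₀, and suppose there is μ∞ ∈ X with d(η(T), μ∞) → 0 as T → ∞ and L(μ∞) = inf_{x∈X} L(x). Assume the map x ↦ d_G(μ₀, x) is sequentially lower semicontinuous at μ∞. Then: (i) if G is sequentially lower semicontinuous at μ∞, then G(μ∞) = 0; (ii) for every ν ∈ X with L(ν) = inf L and G(ν) = 0 one has d_G(μ₀, μ∞) ≤ d_G(μ₀, ν). In particular, μ∞ minimizes x ↦ d_G(μ₀, x) over the set of minimizers of L at which G vanishes. -/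

import Mathlib

open MeasureTheory Set Filter
open scoped ENNReal

noncomputable section

/-- `m` is a (nonnegative, integrable) upper speed of the curve `γ` on `[a,b]`:
`dist (γ s) (γ t) ≤ ∫_s^t m` for all `a ≤ s ≤ t ≤ b`. -/
def IsUpperSpeedOn {X : Type*} [MetricSpace X] (γ : ℝ → X) (m : ℝ → ℝ) (a b : ℝ) : Prop :=
  (∀ r ∈ Set.Icc a b, 0 ≤ m r) ∧
  IntervalIntegrable m MeasureTheory.volume a b ∧
  ∀ s t : ℝ, a ≤ s → s ≤ t → t ≤ b → dist (γ s) (γ t) ≤ ∫ r in s..t, m r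

/-- The Finsler cost `d_G(x,y)`: the infimum of `∫_0^1 m(t) G(γ(t)) dt` over continuous
curves `γ : [0,1] → X` joining `x` to `y` with integrable upper speed `m`;
`+∞` if no admissible pair exists. -/
def finslerCost {X : Type*} [MetricSpace X] (G : X → ℝ) (x y : X) : ℝ≥0∞ :=
  sInf { c : ℝ≥0∞ | ∃ γ : ℝ → X, ∃ m : ℝ → ℝ,
    ContinuousOn γ (Set.Icc 0 1) ∧ γ 0 = x ∧ γ 1 = y ∧
    IsUpperSpeedOn γ m 0 1 ∧
    c = ∫⁻ t in Set.Ioc (0:ℝ) 1, ENNReal.ofReal (m t * G (γ t)) }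

/-- The action `E_G^T(x,y)`: the infimum of `∫_0^T ((1/2) m(t)² + (1/2) G(γ(t))²) dt` over
continuous curves `γ : [0,T] → X` joining `x` to `y` with square-integrable upper speed `m`;
`+∞` if no admissible pair exists. -/
def actionCost {X : Type*} [MetricSpace X] (G : X → ℝ) (T : ℝ) (x y : X) : ℝ≥0∞ :=
  sInf { c : ℝ≥0∞ | ∃ γ : ℝ → X, ∃ m : ℝ → ℝ,
    ContinuousOn γ (Set.Icc 0 T) ∧ γ 0 = x ∧ γ T = y ∧
    IsUpperSpeedOn γ m 0 T ∧
    IntervalIntegrable (fun t => (m t) ^ 2) MeasureTheory.volume 0 T ∧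
    c = ∫⁻ t in Set.Ioc (0:ℝ) T,
          ENNReal.ofReal ((1/2) * (m t) ^ 2 + (1/2) * (G (γ t)) ^ 2) }

/-- `G` is a strong upper gradient of `v`: along every continuous curve with integrable
upper speed `m`, `|v(γ t) − v(γ s)| ≤ ∫_s^t G(γ r) m(r) dr` (the right-hand side taken as a
possibly infinite nonnegative integral). -/
def IsStrongUpperGradient {X : Type*} [MetricSpace X] (G v : X → ℝ) : Prop :=
  ∀ (a b : ℝ) (γ : ℝ → X) (m : ℝ → ℝ),
    ContinuousOn γ (Set.Icc a b) → IsUpperSpeedOn γ m a b →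
    ∀ s t : ℝ, a ≤ s → s ≤ t → t ≤ b →
      ENNReal.ofReal |v (γ t) - v (γ s)| ≤
        ∫⁻ r in Set.Ioc s t, ENNReal.ofReal (G (γ r) * m r)

/-- A gradient-flow curve (curve of maximal slope in energy-dissipation form) of `v` with
respect to `G`: `η` is continuous on `[0,∞)`, `G∘η` is square-integrable on compacts and is
an upper speed of `η` on every compact subinterval of `[0,∞)`, and the energy-dissipation
equality `v(η s) − v(η t) = ∫_s^t G(η r)² dr` holds for `0 ≤ s ≤ t`. -/
def IsGradientFlowCurve {X : Type*} [MetricSpace X] (v G : X → ℝ) (η : ℝ → X) : Prop :=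
  ContinuousOn η (Set.Ici 0) ∧
  (∀ b : ℝ, 0 ≤ b → IntervalIntegrable (fun t => (G (η t)) ^ 2) MeasureTheory.volume 0 b) ∧
  (∀ a b : ℝ, 0 ≤ a → a ≤ b → IsUpperSpeedOn η (fun t => G (η t)) a b) ∧
  ∀ s t : ℝ, 0 ≤ s → s ≤ t → v (η s) - v (η t) = ∫ r in s..t, (G (η r)) ^ 2

private lemma finslerCost_self_le' {X : Type*} [MetricSpace X] (G : X → ℝ) (x : X) :
    finslerCost G x x ≤ 0 := by
  apply sInf_le
  refine ⟨fun _ => x, fun _ => 0, continuousOn_const, rfl, rfl,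
    ⟨fun _ _ => le_rfl, intervalIntegrable_const, ?_⟩, ?_⟩
  · intro s t _ _ _; simp
  · simp

private lemma ofReal_sub_le_finslerCost' {X : Type*} [MetricSpace X] {G L : X → ℝ}
    (hSUG : IsStrongUpperGradient G L) (x y : X) :
    ENNReal.ofReal (L x - L y) ≤ finslerCost G x y := by
  refine le_sInf ?_
  rintro c ⟨γ, m, hcont, h0, h1, hus, rfl⟩
  have h := hSUG 0 1 γ m hcont hus 0 1 le_rfl zero_le_one le_rfl
  rw [h0, h1] at h
  calc ENNReal.ofReal (L x - L y) ≤ ENNReal.ofReal |L y - L x| := by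
        apply ENNReal.ofReal_le_ofReal
        rw [abs_sub_comm]; exact le_abs_self _
    _ ≤ _ := h.trans (le_of_eq (MeasureTheory.lintegral_congr fun r => by rw [mul_comm]))

private lemma finslerCost_flow_le' {X : Type*} [MetricSpace X] {L G : X → ℝ}
    (hG0 : ∀ x, 0 ≤ G x) {η : ℝ → X} (hη : IsGradientFlowCurve L G η) {T : ℝ} (hT : 0 ≤ T) :
    finslerCost G (η 0) (η T) ≤ ENNReal.ofReal (∫ r in (0:ℝ)..T, (G (η r)) ^ 2) := by
  rcases hT.eq_or_lt with hT0 | hTpos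
  · rw [← hT0]
    refine le_trans (finslerCost_self_le' G (η 0)) ?_
    simp
  obtain ⟨hcont, hint2, hus, _⟩ := hη
  set γ : ℝ → X := fun t => η (T * t) with hγdef
  set m : ℝ → ℝ := fun t => T * G (η (T * t)) with hmdef
  have husT := hus 0 T le_rfl hT
  have hintG : IntervalIntegrable (fun t => G (η t)) volume 0 T := husT.2.1
  have hm_int : IntervalIntegrable m volume 0 1 := by
    have h := (hintG.comp_mul_left (c := T)).const_mul T
    rwa [zero_div, div_self hTpos.ne'] at h
  have hγcont : ContinuousOn γ (Set.Icc 0 1) := by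
    apply hcont.comp (continuous_const.mul continuous_id).continuousOn
    intro t ht
    exact mul_nonneg hT ht.1
  have hdist : ∀ s t : ℝ, 0 ≤ s → s ≤ t → t ≤ 1 →
      dist (γ s) (γ t) ≤ ∫ r in s..t, m r := by
    intro s t hs hst ht1
    have h1 : dist (η (T * s)) (η (T * t)) ≤ ∫ r in (T * s)..(T * t), G (η r) :=
      husT.2.2 (T * s) (T * t) (mul_nonneg hT hs) (by nlinarith) (by nlinarith)
    have h2 : ∫ r in s..t, m r = ∫ r in (T * s)..(T * t), G (η r) := by
      rw [← intervalIntegral.smul_integral_comp_mul_left (fun r => G (η r)) T,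
        smul_eq_mul, ← intervalIntegral.integral_const_mul]
    rw [h2]; exact h1
  have hsq : IntervalIntegrable (fun t => (G (η t)) ^ 2) volume 0 T := hint2 T hT
  have hsq1 : IntervalIntegrable (fun t => T * (G (η (T * t))) ^ 2) volume 0 1 := by
    have h := (hsq.comp_mul_left (c := T)).const_mul T
    rwa [zero_div, div_self hTpos.ne'] at h
  have hfeq : ∀ t : ℝ, m t * G (γ t) = T * (G (η (T * t))) ^ 2 := by
    intro t; simp only [hmdef, hγdef]; ring
  have hf_int : IntegrableOn (fun t => m t * G (γ t)) (Set.Ioc 0 1) volume := by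
    have h := hsq1.1
    exact h.congr_fun (fun t _ => (hfeq t).symm) measurableSet_Ioc
  refine le_trans (sInf_le ⟨γ, m, hγcont, by simp [hγdef], by simp [hγdef],
    ⟨fun r _ => mul_nonneg hT (hG0 _), hm_int, hdist⟩, rfl⟩) (le_of_eq ?_)
  rw [← MeasureTheory.ofReal_integral_eq_lintegral_ofReal hf_int
    (Filter.Eventually.of_forall fun t => mul_nonneg (mul_nonneg hT (hG0 _)) (hG0 _))]
  congr 1
  rw [← intervalIntegral.integral_of_le zero_le_one]
  calc ∫ t in (0:ℝ)..1, m t * G (γ t) = ∫ t in (0:ℝ)..1, T * (G (η (T * t))) ^ 2 :=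
        intervalIntegral.integral_congr (fun t _ => hfeq t)
    _ = T • ∫ t in (0:ℝ)..1, (G (η (T * t))) ^ 2 := by
        rw [intervalIntegral.integral_const_mul, smul_eq_mul]
    _ = ∫ r in (T * 0)..(T * 1), (G (η r)) ^ 2 :=
        intervalIntegral.smul_integral_comp_mul_left (fun r => (G (η r)) ^ 2) T
    _ = ∫ r in (0:ℝ)..T, (G (η r)) ^ 2 := by norm_num

/-- (Nonvanishing selection.) Let `G : X → [0,∞)` be a Borel strong upper
gradient of `L`, let `η` be a gradient-flow curve of `L` w.r.t. `G` with `η 0 = μ₀`,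
converging to `μ∞` which minimizes `L`. If `d_G(μ₀,·)` is sequentially l.s.c. at `μ∞`, then:
(i) if `G` is sequentially l.s.c. at `μ∞` then `G μ∞ = 0`; (ii) for every minimizer `ν` of
`L` with `G ν = 0` one has `d_G(μ₀, μ∞) ≤ d_G(μ₀, ν)`. -/
theorem nonvanishing_selection {X : Type*} [MetricSpace X] [MeasurableSpace X] [BorelSpace X]
    (L G : X → ℝ) (hG0 : ∀ x, 0 ≤ G x) (hGmeas : Measurable G)
    (hSUG : IsStrongUpperGradient G L)
    (μ₀ : X) (η : ℝ → X) (hη : IsGradientFlowCurve L G η) (hη0 : η 0 = μ₀)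
    (μinf : X) (hconv : Filter.Tendsto η Filter.atTop (nhds μinf))
    (hmin : ∀ x : X, L μinf ≤ L x)
    (hdGlsc : ∀ u : ℕ → X, Filter.Tendsto u Filter.atTop (nhds μinf) →
      finslerCost G μ₀ μinf ≤ Filter.liminf (fun n => finslerCost G μ₀ (u n)) Filter.atTop) :
    ((∀ u : ℕ → X, Filter.Tendsto u Filter.atTop (nhds μinf) →
        G μinf ≤ Filter.liminf (fun n => G (u n)) Filter.atTop) → G μinf = 0) ∧
    (∀ ν : X, (∀ x : X, L ν ≤ L x) → G ν = 0 →
      finslerCost G μ₀ μinf ≤ finslerCost G μ₀ ν) := by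
  constructor
  · -- part (i)
    intro hGlsc
    have hbd : ∀ b : ℝ, 0 ≤ b → ∫ r in (0:ℝ)..b, (G (η r)) ^ 2 ≤ L μ₀ - L μinf := by
      intro b hb
      have hE := hη.2.2.2 0 b le_rfl hb
      rw [hη0] at hE
      rw [← hE]
      linarith [hmin (η b)]
    have hCnn : 0 ≤ L μ₀ - L μinf := sub_nonneg.2 (hmin μ₀)
    have key : ∀ n : ℕ, ∃ t : ℝ, (n : ℝ) ≤ t ∧ G (η t) < 1 / ((n : ℝ) + 1) := by
      intro n
      by_contra hcon
      push_neg at hcon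
      set C := L μ₀ - L μinf with hCdef
      set b := (n : ℝ) + ((n : ℝ) + 1) ^ 2 * (C + 1) with hbdef
      have hnb : (n : ℝ) ≤ b := by nlinarith [sq_nonneg ((n : ℝ) + 1)]
      have hb0 : (0 : ℝ) ≤ b := le_trans n.cast_nonneg hnb
      have hint : IntervalIntegrable (fun t => (G (η t)) ^ 2) volume 0 b := hη.2.1 b hb0
      have hint0n : IntervalIntegrable (fun t => (G (η t)) ^ 2) volume 0 n :=
        hint.mono_set (by
          rw [Set.uIcc_of_le (n.cast_nonneg : (0:ℝ) ≤ n), Set.uIcc_of_le hb0]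
          exact Set.Icc_subset_Icc le_rfl hnb)
      have hintnb : IntervalIntegrable (fun t => (G (η t)) ^ 2) volume n b :=
        hint.mono_set (by
          rw [Set.uIcc_of_le hnb, Set.uIcc_of_le hb0]
          exact Set.Icc_subset_Icc n.cast_nonneg le_rfl)
      have hlow : ∫ r in (n : ℝ)..b, (1 / ((n : ℝ) + 1)) ^ 2 ≤
          ∫ r in (n : ℝ)..b, (G (η r)) ^ 2 := by
        apply intervalIntegral.integral_mono_on hnb intervalIntegrable_const hintnb
        intro t ht
        have h1 : (0 : ℝ) < 1 / ((n : ℝ) + 1) := by positivity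
        have h2 := hcon t ht.1
        nlinarith
      rw [intervalIntegral.integral_const, smul_eq_mul] at hlow
      have h0n : 0 ≤ ∫ r in (0 : ℝ)..(n : ℝ), (G (η r)) ^ 2 :=
        intervalIntegral.integral_nonneg n.cast_nonneg (fun t _ => sq_nonneg _)
      have hadd := intervalIntegral.integral_add_adjacent_intervals hint0n hintnb
      have hsplit : ∫ r in (n : ℝ)..b, (G (η r)) ^ 2 ≤ C := by
        have := hbd b hb0
        rw [← hadd] at this
        linarith
      have hval : (b - (n : ℝ)) * (1 / ((n : ℝ) + 1)) ^ 2 = C + 1 := by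
        have hne : ((n : ℝ) + 1) ≠ 0 := by positivity
        field_simp [hbdef]
        rw [hbdef]; ring
      rw [hval] at hlow
      linarith
    choose t ht1 ht2 using key
    have httop : Tendsto t atTop atTop :=
      tendsto_atTop_mono ht1 tendsto_natCast_atTop_atTop
    have hu : Tendsto (fun n => η (t n)) atTop (nhds μinf) := hconv.comp httop
    have hGz : Tendsto (fun n => G (η (t n))) atTop (nhds 0) :=
      squeeze_zero (fun n => hG0 _) (fun n => (ht2 n).le)
        tendsto_one_div_add_atTop_nhds_zero_nat
    have hle := hGlsc (fun n => η (t n)) hu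
    rw [hGz.liminf_eq] at hle
    exact le_antisymm hle (hG0 μinf)
  · -- part (ii)
    intro ν hνmin hGν
    have hLν : L ν = L μinf := le_antisymm (hνmin μinf) (hmin ν)
    have htend : Tendsto (fun n : ℕ => η n) atTop (nhds μinf) :=
      hconv.comp tendsto_natCast_atTop_atTop
    refine (hdGlsc (fun n : ℕ => η n) htend).trans ?_
    have hbound : ∀ n : ℕ, finslerCost G μ₀ (η n) ≤ ENNReal.ofReal (L μ₀ - L μinf) := by
      intro n
      have h1 := finslerCost_flow_le' hG0 hη (n.cast_nonneg : (0:ℝ) ≤ n)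
      rw [hη0] at h1
      refine h1.trans (ENNReal.ofReal_le_ofReal ?_)
      have hE := hη.2.2.2 0 n le_rfl n.cast_nonneg
      rw [hη0] at hE
      rw [← hE]
      linarith [hmin (η n)]
    have h2 : liminf (fun n : ℕ => finslerCost G μ₀ (η n)) atTop ≤
        ENNReal.ofReal (L μ₀ - L μinf) :=
      le_trans (Filter.liminf_le_liminf (Filter.Eventually.of_forall hbound))
        (by simp [Filter.liminf_const])
    refine h2.trans ?_
    have h3 := ofReal_sub_le_finslerCost' hSUG μ₀ ν
    rw [hLν] at h3
    exact h3
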